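/- Fix an integer s ≥ 2. There is a constant C (depending only on s) such that for every integer z ≥ 1, ∑_{ω ∈ Ω_z, |ω| ≤ s−1} w(ω) ≤ C z^{−1/s}. -/

import Mathlib

open Filter
open scoped Classical

/-- `σ(ω)`: the set of integers expressible as `∑_{x ∈ ω} a x * x` where the coefficients
`a x` are positive integers with `∑_{x ∈ ω} a x = s`. (Empty when `|ω| > s` or `ω = ∅`.) -/
def sigmaSet (s : ℕ) (ω : Finset ℕ) : Set ℕ :=
  {z | ∃ a : ℕ → ℕ, (∀ x ∈ ω, 1 ≤ a x) ∧ (∑ x ∈ ω, a x) = s ∧ (∑ x ∈ ω, a x * x) = z}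

/-- `w(ω) = ∏_{x ∈ ω} (1/s) x^{−1+1/s}`. -/
noncomputable def wgt (s : ℕ) (ω : Finset ℕ) : ℝ :=
  ∏ x ∈ ω, (1 / (s : ℝ)) * (x : ℝ) ^ (-1 + 1 / (s : ℝ))

namespace SumWgtAux

lemma wgt_nonneg (s : ℕ) (ω : Finset ℕ) : 0 ≤ wgt s ω := by
  apply Finset.prod_nonneg
  intro x _
  have h1 : (0:ℝ) ≤ (x:ℝ) ^ (-1 + 1 / (s : ℝ)) := Real.rpow_nonneg (by positivity) _
  positivity

def topEl (τ : Finset ℕ) : ℕ := WithBot.unbotD 0 τ.max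

lemma topEl_eq {τ : Finset ℕ} (h : τ.Nonempty) : topEl τ = τ.max' h := by
  rw [topEl, ← Finset.coe_max' h]
  rfl

lemma topEl_mem {τ : Finset ℕ} (h : τ.Nonempty) : topEl τ ∈ τ := by
  rw [topEl_eq h]; exact τ.max'_mem h

lemma le_topEl {τ : Finset ℕ} (h : τ.Nonempty) {x : ℕ} (hx : x ∈ τ) : x ≤ topEl τ := by
  rw [topEl_eq h]; exact Finset.le_max' τ x hx

noncomputable def coeffs (s z : ℕ) (ω : Finset ℕ) : ℕ → ℕ :=
  if h : z ∈ sigmaSet s ω then h.choose else fun _ => 0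

lemma coeffs_spec {s z : ℕ} {ω : Finset ℕ} (h : z ∈ sigmaSet s ω) :
    (∀ x ∈ ω, 1 ≤ coeffs s z ω x) ∧ (∑ x ∈ ω, coeffs s z ω x) = s ∧
      (∑ x ∈ ω, coeffs s z ω x * x) = z := by
  rw [coeffs, dif_pos h]
  exact h.choose_spec


lemma rpow_step {s : ℕ} (hs : 2 ≤ s) {y : ℝ} (hy : 1 ≤ y) :
    y ^ (-1 + 1 / (s:ℝ)) ≤ (s:ℝ) * (y ^ (1/(s:ℝ)) - (y - 1) ^ (1/(s:ℝ))) := by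
  have hs0 : (0:ℝ) < s := by positivity
  have hs2 : (2:ℝ) ≤ s := by exact_mod_cast hs
  have hy0 : (0:ℝ) < y := lt_of_lt_of_le one_pos hy
  set t : ℝ := 1 / (s:ℝ) with ht
  have ht0 : 0 < t := by positivity
  have hsne : (s:ℝ) ≠ 0 := ne_of_gt hs0
  have hts : t * (s:ℝ) = 1 := by rw [ht]; field_simp
  have hyt0 : 0 ≤ y ^ t := Real.rpow_nonneg hy0.le _
  have hsy : (2:ℝ) ≤ (s:ℝ) * y := by nlinarith
  have hfac : (0:ℝ) < 1 - 1/((s:ℝ)*y) := by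
    have : 1/((s:ℝ)*y) ≤ 1/2 := by
      apply one_div_le_one_div_of_le <;> linarith
    linarith
  set R : ℝ := y ^ t * (1 - 1/((s:ℝ)*y)) with hR
  have hR0 : 0 ≤ R := mul_nonneg hyt0 hfac.le
  -- (y^t)^s = y
  have hyts : (y ^ t) ^ (s:ℕ) = y := by
    rw [← Real.rpow_natCast (y ^ t) s, ← Real.rpow_mul hy0.le, hts, Real.rpow_one]
  -- Bernoulli
  have hbern : 1 - 1/y ≤ (1 - 1/((s:ℝ)*y)) ^ (s:ℕ) := by
    have h2 : (-2:ℝ) ≤ -(1/((s:ℝ)*y)) := by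
      have : 1/((s:ℝ)*y) ≤ 1/2 := by
        apply one_div_le_one_div_of_le <;> linarith
      linarith
    have := one_add_mul_le_pow h2 s
    have hss : (s:ℝ) * -(1/((s:ℝ)*y)) = -(1/y) := by field_simp
    calc 1 - 1/y = 1 + (s:ℝ) * -(1/((s:ℝ)*y)) := by rw [hss]; ring
      _ ≤ (1 + -(1/((s:ℝ)*y))) ^ (s:ℕ) := this
      _ = (1 - 1/((s:ℝ)*y)) ^ (s:ℕ) := by ring_nf
  have hRs : y - 1 ≤ R ^ (s:ℕ) := by
    have : R ^ (s:ℕ) = y * (1 - 1/((s:ℝ)*y)) ^ (s:ℕ) := by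
      rw [hR, mul_pow, hyts]
    rw [this]
    calc y - 1 = y * (1 - 1/y) := by field_simp
      _ ≤ y * (1 - 1/((s:ℝ)*y)) ^ (s:ℕ) := by
          apply mul_le_mul_of_nonneg_left hbern hy0.le
  have hkey : (y - 1) ^ t ≤ R := by
    have h1 : (y - 1) ^ t ≤ (R ^ (s:ℕ)) ^ t :=
      Real.rpow_le_rpow (by linarith) hRs ht0.le
    have h2 : (R ^ (s:ℕ)) ^ t = R := by
      rw [← Real.rpow_natCast R s, ← Real.rpow_mul hR0]
      rw [show (s:ℝ) * t = 1 by rw [mul_comm]; exact hts, Real.rpow_one]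
    rwa [h2] at h1
  -- R = y^t - (1/s) * y^(-1+t)
  have hyet : y ^ (-1 + t) = y ^ t / y := by
    rw [Real.rpow_add hy0, Real.rpow_neg_one]
    ring
  have hReq : R = y ^ t - (1/(s:ℝ)) * y ^ (-1 + t) := by
    rw [hR, hyet]
    field_simp
  rw [hReq] at hkey
  have hfin : (1/(s:ℝ)) * y ^ (-1 + t) ≤ y ^ t - (y - 1) ^ t := by linarith
  calc y ^ (-1 + t) = (s:ℝ) * ((1/(s:ℝ)) * y ^ (-1 + t)) := by field_simp
    _ ≤ (s:ℝ) * (y ^ t - (y-1) ^ t) := by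
        apply mul_le_mul_of_nonneg_left hfin hs0.le

lemma sum_rpow_le (s : ℕ) (hs : 2 ≤ s) (z : ℕ) :
    ∑ x ∈ Finset.Icc 1 z, (1/(s:ℝ)) * (x:ℝ) ^ (-1 + 1/(s:ℝ)) ≤ (z:ℝ) ^ (1/(s:ℝ)) := by
  have hs0 : (0:ℝ) < s := by positivity
  have htel : ∑ x ∈ Finset.Icc 1 z, ((x:ℝ) ^ (1/(s:ℝ)) - ((x:ℝ) - 1) ^ (1/(s:ℝ)))
      = (z:ℝ) ^ (1/(s:ℝ)) := by
    have : Finset.Icc 1 z = Finset.Ico 1 (z+1) := by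
      rw [Finset.Ico_add_one_right_eq_Icc]
    rw [this, Finset.sum_Ico_eq_sum_range]
    simp only [Nat.add_sub_cancel]
    have heq : ∀ i ∈ Finset.range z,
        (((1+i:ℕ):ℝ) ^ (1/(s:ℝ)) - (((1+i:ℕ):ℝ) - 1) ^ (1/(s:ℝ)))
        = ((i+1:ℕ):ℝ) ^ (1/(s:ℝ)) - ((i:ℕ):ℝ) ^ (1/(s:ℝ)) := by
      intro i _
      push_cast
      ring_nf
    rw [Finset.sum_congr rfl heq]
    rw [Finset.sum_range_sub (fun n => ((n:ℕ):ℝ) ^ (1/(s:ℝ))) z]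
    simp [Real.zero_rpow (show ((s:ℝ))⁻¹ ≠ 0 by positivity)]
  have hstep : ∑ x ∈ Finset.Icc 1 z, (x:ℝ) ^ (-1 + 1/(s:ℝ))
      ≤ (s:ℝ) * (z:ℝ) ^ (1/(s:ℝ)) := by
    calc ∑ x ∈ Finset.Icc 1 z, (x:ℝ) ^ (-1 + 1/(s:ℝ))
        ≤ ∑ x ∈ Finset.Icc 1 z, (s:ℝ) * ((x:ℝ) ^ (1/(s:ℝ)) - ((x:ℝ) - 1) ^ (1/(s:ℝ))) := by
          apply Finset.sum_le_sum
          intro x hx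
          have hx1 : 1 ≤ x := (Finset.mem_Icc.mp hx).1
          exact rpow_step hs (by exact_mod_cast hx1)
      _ = (s:ℝ) * ∑ x ∈ Finset.Icc 1 z, ((x:ℝ) ^ (1/(s:ℝ)) - ((x:ℝ) - 1) ^ (1/(s:ℝ))) := by
          rw [Finset.mul_sum]
      _ = (s:ℝ) * (z:ℝ) ^ (1/(s:ℝ)) := by rw [htel]
  rw [← Finset.mul_sum]
  calc (1/(s:ℝ)) * ∑ x ∈ Finset.Icc 1 z, (x:ℝ) ^ (-1 + 1/(s:ℝ))
      ≤ (1/(s:ℝ)) * ((s:ℝ) * (z:ℝ) ^ (1/(s:ℝ))) := by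
        apply mul_le_mul_of_nonneg_left hstep (by positivity)
    _ = (z:ℝ) ^ (1/(s:ℝ)) := by field_simp

lemma sum_powersetCard_le (A : Finset ℕ) (f : ℕ → ℝ) (hf : ∀ x, 0 ≤ f x) :
    ∀ j : ℕ, ∑ τ ∈ A.powersetCard j, ∏ x ∈ τ, f x ≤ (∑ x ∈ A, f x) ^ j := by
  intro j
  induction j with
  | zero => simp
  | succ j ih =>
    have hprodnn : ∀ τ : Finset ℕ, 0 ≤ ∏ x ∈ τ, f x :=
      fun τ => Finset.prod_nonneg fun x _ => hf x
    have step : ∑ τ ∈ A.powersetCard (j+1), ∏ x ∈ τ, f x ≤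
        ∑ p ∈ A ×ˢ A.powersetCard j, f p.1 * ∏ x ∈ p.2, f x := by
      have hmem : ∀ τ ∈ A.powersetCard (j+1), τ.Nonempty := by
        intro τ hτ
        rw [Finset.mem_powersetCard] at hτ
        exact Finset.card_pos.mp (hτ.2 ▸ Nat.succ_pos j)
      have hsplit : ∑ τ ∈ A.powersetCard (j+1), ∏ x ∈ τ, f x
          = ∑ τ ∈ A.powersetCard (j+1), f (topEl τ) * ∏ x ∈ τ.erase (topEl τ), f x := by
        apply Finset.sum_congr rfl
        intro τ hτ
        exact (Finset.mul_prod_erase τ f (topEl_mem (hmem τ hτ))).symm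
      rw [hsplit]
      have hinj : ∀ τ₁ ∈ A.powersetCard (j+1), ∀ τ₂ ∈ A.powersetCard (j+1),
          (topEl τ₁, τ₁.erase (topEl τ₁)) = (topEl τ₂, τ₂.erase (topEl τ₂)) → τ₁ = τ₂ := by
        intro τ₁ h₁ τ₂ h₂ heq
        have h1 := Finset.insert_erase (topEl_mem (hmem τ₁ h₁))
        have h2 := Finset.insert_erase (topEl_mem (hmem τ₂ h₂))
        rw [Prod.mk.injEq] at heq
        rw [← h1, ← h2, heq.2, heq.1]
      calc ∑ τ ∈ A.powersetCard (j+1), f (topEl τ) * ∏ x ∈ τ.erase (topEl τ), f x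
          = ∑ p ∈ (A.powersetCard (j+1)).image
              (fun τ => (topEl τ, τ.erase (topEl τ))), f p.1 * ∏ x ∈ p.2, f x := by
            rw [Finset.sum_image hinj]
        _ ≤ ∑ p ∈ A ×ˢ A.powersetCard j, f p.1 * ∏ x ∈ p.2, f x := by
            apply Finset.sum_le_sum_of_subset_of_nonneg
            · intro p hp
              rw [Finset.mem_image] at hp
              obtain ⟨τ, hτ, rfl⟩ := hp
              rw [Finset.mem_powersetCard] at hτ
              rw [Finset.mem_product]
              constructor
              · exact hτ.1 (topEl_mem (Finset.card_pos.mp (hτ.2 ▸ Nat.succ_pos j)))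
              · rw [Finset.mem_powersetCard]
                refine ⟨(Finset.erase_subset _ _).trans hτ.1, ?_⟩
                rw [Finset.card_erase_of_mem
                  (topEl_mem (Finset.card_pos.mp (hτ.2 ▸ Nat.succ_pos j))), hτ.2]
                omega
            · intro p _ _
              exact mul_nonneg (hf _) (hprodnn _)
    calc ∑ τ ∈ A.powersetCard (j+1), ∏ x ∈ τ, f x
        ≤ ∑ p ∈ A ×ˢ A.powersetCard j, f p.1 * ∏ x ∈ p.2, f x := step
      _ = (∑ x ∈ A, f x) * ∑ τ ∈ A.powersetCard j, ∏ x ∈ τ, f x := by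
          rw [Finset.sum_mul_sum]
          rw [Finset.sum_product]
      _ ≤ (∑ x ∈ A, f x) * (∑ x ∈ A, f x) ^ j := by
          apply mul_le_mul_of_nonneg_left ih
          exact Finset.sum_nonneg fun x _ => hf x
      _ = (∑ x ∈ A, f x) ^ (j+1) := by ring

end SumWgtAux

open SumWgtAux

/-- There is a constant `C` (depending only on `s`) such that for every `z ≥ 1`,
`∑_{ω ∈ Ω_z, |ω| ≤ s−1} w(ω) ≤ C z^{−1/s}` (all such `ω` are subsets of `[1, z]`). -/
theorem sum_wgt_small_support (s : ℕ) (hs : 2 ≤ s) :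
    ∃ C : ℝ, 0 < C ∧ ∀ z : ℕ, 1 ≤ z →
      ∑ ω ∈ (Finset.Icc 1 z).powerset.filter
            (fun ω => z ∈ sigmaSet s ω ∧ ω.card ≤ s - 1), wgt s ω
        ≤ C * (z : ℝ) ^ (-(1 : ℝ) / (s : ℝ)) := by
  have hs0 : (0:ℝ) < s := by positivity
  have hsne : (s:ℝ) ≠ 0 := ne_of_gt hs0
  refine ⟨((s:ℝ)+1)^s * (s:ℝ) ^ ((1:ℝ) - 1/(s:ℝ)), by positivity, ?_⟩
  intro z hz
  have hz0 : (0:ℝ) < z := by exact_mod_cast Nat.lt_of_lt_of_le Nat.zero_lt_one hz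
  have hz1 : (1:ℝ) ≤ (z:ℝ) := by exact_mod_cast hz
  set e : ℝ := -1 + 1/(s:ℝ) with he
  have he0 : e ≤ 0 := by
    rw [he]
    have : 1/(s:ℝ) ≤ 1 := by
      rw [div_le_one hs0]; exact_mod_cast (by omega : 1 ≤ s)
    linarith
  set S := (Finset.Icc 1 z).powerset.filter
      (fun ω => z ∈ sigmaSet s ω ∧ ω.card ≤ s - 1) with hSdef
  set P := (Finset.Icc 1 z).powerset.filter (fun τ => τ.card ≤ s - 2) with hPdef
  -- basic facts about members of S
  have hSfacts : ∀ ω ∈ S, ω.Nonempty ∧ z ∈ sigmaSet s ω ∧ ω ⊆ Finset.Icc 1 z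
      ∧ ω.card ≤ s - 1 := by
    intro ω hω
    rw [hSdef, Finset.mem_filter, Finset.mem_powerset] at hω
    obtain ⟨hsub, hzs, hcard⟩ := hω
    refine ⟨?_, hzs, hsub, hcard⟩
    rcases Finset.eq_empty_or_nonempty ω with rfl | hne
    · exfalso
      obtain ⟨a, _, hsum, _⟩ := hzs
      simp at hsum
      omega
    · exact hne
  have hMlarge : ∀ ω ∈ S, (z:ℝ)/(s:ℝ) ≤ ((topEl ω : ℕ):ℝ) := by
    intro ω hω
    obtain ⟨hne, hzs, _, _⟩ := hSfacts ω hω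
    obtain ⟨a, ha1, hasum, haz⟩ := hzs
    have hle : z ≤ s * topEl ω := by
      have : ∑ x ∈ ω, a x * x ≤ ∑ x ∈ ω, a x * topEl ω := by
        apply Finset.sum_le_sum
        intro x hx
        exact Nat.mul_le_mul_left _ (le_topEl hne hx)
      rw [haz] at this
      rwa [← Finset.sum_mul, hasum] at this
    rw [div_le_iff₀ hs0]
    calc (z:ℝ) ≤ ((s * topEl ω : ℕ):ℝ) := by exact_mod_cast hle
      _ = ((topEl ω : ℕ):ℝ) * (s:ℝ) := by push_cast; ring
  -- Step 1
  have step1 : ∀ ω ∈ S, wgt s ω ≤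
      (1/(s:ℝ)) * ((z:ℝ)/(s:ℝ)) ^ e * wgt s (ω.erase (topEl ω)) := by
    intro ω hω
    obtain ⟨hne, _, _, _⟩ := hSfacts ω hω
    have hsplit : wgt s ω = ((1/(s:ℝ)) * ((topEl ω : ℕ):ℝ) ^ e)
        * wgt s (ω.erase (topEl ω)) :=
      (Finset.mul_prod_erase ω _ (topEl_mem hne)).symm
    rw [hsplit]
    apply mul_le_mul_of_nonneg_right _ (wgt_nonneg s _)
    apply mul_le_mul_of_nonneg_left _ (by positivity)
    exact Real.rpow_le_rpow_of_nonpos (by positivity) (hMlarge ω hω) he0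
  -- fiber cardinality bound
  have fibcard : ∀ τ ∈ S.image (fun ω => ω.erase (topEl ω)),
      (S.filter (fun ω => ω.erase (topEl ω) = τ)).card ≤ (s+1)^s := by
    intro τ hτ
    have hcard_le : (S.filter (fun ω => ω.erase (topEl ω) = τ)).card
        ≤ (τ.pi (fun _ => Finset.range (s+1))).card := by
      apply Finset.card_le_card_of_injOn (fun ω => fun x _ => coeffs s z ω x)
      · -- maps to
        intro ω hω
        rw [Finset.mem_coe, Finset.mem_filter] at hω
        obtain ⟨hωS, hωτ⟩ := hω
        obtain ⟨hne, hzs, _, _⟩ := hSfacts ω hωS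
        rw [Finset.mem_coe, Finset.mem_pi]
        intro x hx
        rw [Finset.mem_range, Nat.lt_succ_iff]
        have hxω : x ∈ ω := by
          rw [← hωτ] at hx
          exact Finset.mem_of_mem_erase hx
        obtain ⟨hpos, hsum, _⟩ := coeffs_spec hzs
        calc coeffs s z ω x ≤ ∑ y ∈ ω, coeffs s z ω y :=
              Finset.single_le_sum (fun y _ => Nat.zero_le _) hxω
          _ = s := hsum
      · -- injective
        intro ω₁ h₁ ω₂ h₂ heq
        simp only [Finset.coe_filter, Set.mem_setOf_eq] at h₁ h₂
        obtain ⟨h₁S, h₁τ⟩ := h₁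
        obtain ⟨h₂S, h₂τ⟩ := h₂
        obtain ⟨hne₁, hzs₁, _, _⟩ := hSfacts ω₁ h₁S
        obtain ⟨hne₂, hzs₂, _, _⟩ := hSfacts ω₂ h₂S
        obtain ⟨hpos₁, hsum₁, hz₁⟩ := coeffs_spec hzs₁
        obtain ⟨hpos₂, hsum₂, hz₂⟩ := coeffs_spec hzs₂
        set M₁ := topEl ω₁ with hM₁
        set M₂ := topEl ω₂ with hM₂
        have hins₁ : insert M₁ τ = ω₁ := by rw [← h₁τ]; exact Finset.insert_erase (topEl_mem hne₁)
        have hins₂ : insert M₂ τ = ω₂ := by rw [← h₂τ]; exact Finset.insert_erase (topEl_mem hne₂)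
        have hnm₁ : M₁ ∉ τ := by rw [← h₁τ]; exact Finset.notMem_erase _ _
        have hnm₂ : M₂ ∉ τ := by rw [← h₂τ]; exact Finset.notMem_erase _ _
        have hcoeff : ∀ x ∈ τ, coeffs s z ω₁ x = coeffs s z ω₂ x := by
          intro x hx
          exact congrFun (congrFun heq x) hx
        have hsumτ : ∑ x ∈ τ, coeffs s z ω₁ x = ∑ x ∈ τ, coeffs s z ω₂ x :=
          Finset.sum_congr rfl hcoeff
        have hsumτ' : ∑ x ∈ τ, coeffs s z ω₁ x * x = ∑ x ∈ τ, coeffs s z ω₂ x * x :=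
          Finset.sum_congr rfl (fun x hx => by rw [hcoeff x hx])
        have e₁ : coeffs s z ω₁ M₁ + ∑ x ∈ τ, coeffs s z ω₁ x = s := by
          rw [← Finset.sum_insert hnm₁, hins₁]; exact hsum₁
        have e₂ : coeffs s z ω₂ M₂ + ∑ x ∈ τ, coeffs s z ω₂ x = s := by
          rw [← Finset.sum_insert hnm₂, hins₂]; exact hsum₂
        have f₁ : coeffs s z ω₁ M₁ * M₁ + ∑ x ∈ τ, coeffs s z ω₁ x * x = z := by
          rw [← Finset.sum_insert (f := fun x => coeffs s z ω₁ x * x) hnm₁, hins₁]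
          exact hz₁
        have f₂ : coeffs s z ω₂ M₂ * M₂ + ∑ x ∈ τ, coeffs s z ω₂ x * x = z := by
          rw [← Finset.sum_insert (f := fun x => coeffs s z ω₂ x * x) hnm₂, hins₂]
          exact hz₂
        have hk : coeffs s z ω₁ M₁ = coeffs s z ω₂ M₂ := by omega
        have hk1 : 1 ≤ coeffs s z ω₁ M₁ := hpos₁ M₁ (topEl_mem hne₁)
        have hMM : M₁ = M₂ := by
          have hmul : coeffs s z ω₁ M₁ * M₁ = coeffs s z ω₂ M₂ * M₂ := by omega
          rw [hk] at hmul hk1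
          exact Nat.eq_of_mul_eq_mul_left (by omega) hmul
        rw [← hins₁, ← hins₂, hMM]
    rw [Finset.card_pi] at hcard_le
    simp only [Finset.card_range, Finset.prod_const] at hcard_le
    -- τ.card ≤ s
    rw [Finset.mem_image] at hτ
    obtain ⟨ω, hωS, rfl⟩ := hτ
    obtain ⟨hne, _, _, hcard⟩ := hSfacts ω hωS
    have : (ω.erase (topEl ω)).card ≤ s := le_trans (Finset.card_erase_le.trans hcard) (by omega)
    exact hcard_le.trans (Nat.pow_le_pow_right (by omega) this)
  -- Step 2
  have step2 : ∑ ω ∈ S, wgt s (ω.erase (topEl ω)) ≤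
      (((s:ℕ)+1)^s : ℝ) * ∑ τ ∈ P, wgt s τ := by
    rw [← Finset.sum_fiberwise_of_maps_to
      (g := fun ω : Finset ℕ => ω.erase (topEl ω))
      (t := S.image fun ω : Finset ℕ => ω.erase (topEl ω))
      (fun ω hω => Finset.mem_image_of_mem _ hω)
      (fun ω : Finset ℕ => wgt s (ω.erase (topEl ω)))]
    have himgsub : S.image (fun ω => ω.erase (topEl ω)) ⊆ P := by
      intro τ hτ
      rw [Finset.mem_image] at hτ
      obtain ⟨ω, hωS, rfl⟩ := hτ
      obtain ⟨_, _, hsub, hcard⟩ := hSfacts ω hωS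
      rw [hPdef, Finset.mem_filter, Finset.mem_powerset]
      constructor
      · exact (Finset.erase_subset _ _).trans hsub
      · have := Finset.card_erase_le (a := topEl ω) (s := ω)
        have h2 := Finset.card_erase_of_mem (topEl_mem (hSfacts ω hωS).1)
        omega
    calc ∑ τ ∈ S.image (fun ω => ω.erase (topEl ω)),
          ∑ ω ∈ S.filter (fun ω => ω.erase (topEl ω) = τ), wgt s (ω.erase (topEl ω))
        ≤ ∑ τ ∈ S.image (fun ω => ω.erase (topEl ω)), (((s:ℕ)+1)^s : ℝ) * wgt s τ := by
          apply Finset.sum_le_sum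
          intro τ hτ
          have hsum_eq : ∑ ω ∈ S.filter (fun ω => ω.erase (topEl ω) = τ),
              wgt s (ω.erase (topEl ω))
              = (S.filter (fun ω => ω.erase (topEl ω) = τ)).card • wgt s τ := by
            rw [← Finset.sum_const]
            apply Finset.sum_congr rfl
            intro ω hω
            rw [Finset.mem_filter] at hω
            rw [hω.2]
          rw [hsum_eq, nsmul_eq_mul]
          apply mul_le_mul_of_nonneg_right _ (wgt_nonneg s τ)
          exact_mod_cast Nat.cast_le.mpr (fibcard τ hτ)
      _ ≤ (((s:ℕ)+1)^s : ℝ) * ∑ τ ∈ P, wgt s τ := by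
          rw [← Finset.mul_sum]
          apply mul_le_mul_of_nonneg_left _ (by positivity)
          apply Finset.sum_le_sum_of_subset_of_nonneg himgsub
          intro τ _ _
          exact wgt_nonneg s τ
  -- Step 3
  have step3 : ∑ τ ∈ P, wgt s τ ≤ (s:ℝ) * ((z:ℝ) ^ (1/(s:ℝ))) ^ (s-2 : ℕ) := by
    have hPun : P = (Finset.range (s-1)).biUnion
        (fun j => (Finset.Icc 1 z).powersetCard j) := by
      ext τ
      rw [hPdef, Finset.mem_filter, Finset.mem_powerset, Finset.mem_biUnion]
      constructor
      · rintro ⟨hsub, hcard⟩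
        exact ⟨τ.card, by rw [Finset.mem_range]; omega,
          Finset.mem_powersetCard.mpr ⟨hsub, rfl⟩⟩
      · rintro ⟨j, hj, hτ⟩
        rw [Finset.mem_range] at hj
        rw [Finset.mem_powersetCard] at hτ
        exact ⟨hτ.1, by omega⟩
    rw [hPun, Finset.sum_biUnion]
    swap
    · intro i hi j hj hij
      exact Finset.disjoint_left.mpr (fun τ hτi hτj => hij <| by
        simp only [Finset.mem_powersetCard] at hτi hτj
        rw [← hτi.2, ← hτj.2])
    have hB := sum_rpow_le s hs z
    have hW1 : (1:ℝ) ≤ (z:ℝ) ^ (1/(s:ℝ)) := Real.one_le_rpow hz1 (by positivity)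
    have hBnn : (0:ℝ) ≤ ∑ x ∈ Finset.Icc 1 z, (1/(s:ℝ)) * (x:ℝ) ^ e := by
      apply Finset.sum_nonneg
      intro x _
      have : (0:ℝ) ≤ (x:ℝ) ^ e := Real.rpow_nonneg (by positivity) _
      positivity
    calc ∑ j ∈ Finset.range (s-1), ∑ τ ∈ (Finset.Icc 1 z).powersetCard j, wgt s τ
        ≤ ∑ j ∈ Finset.range (s-1), ((z:ℝ) ^ (1/(s:ℝ))) ^ j := by
          apply Finset.sum_le_sum
          intro j _
          calc ∑ τ ∈ (Finset.Icc 1 z).powersetCard j, wgt s τ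
              ≤ (∑ x ∈ Finset.Icc 1 z, (1/(s:ℝ)) * (x:ℝ) ^ e) ^ j := by
                apply sum_powersetCard_le
                intro x
                have : (0:ℝ) ≤ (x:ℝ) ^ e := Real.rpow_nonneg (by positivity) _
                positivity
            _ ≤ ((z:ℝ) ^ (1/(s:ℝ))) ^ j := by
                apply pow_le_pow_left₀ hBnn
                rw [he]; exact hB
      _ ≤ ∑ j ∈ Finset.range (s-1), ((z:ℝ) ^ (1/(s:ℝ))) ^ (s-2 : ℕ) := by
          apply Finset.sum_le_sum
          intro j hj
          rw [Finset.mem_range] at hj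
          exact pow_le_pow_right₀ hW1 (by omega)
      _ = ((s-1 : ℕ) : ℝ) * ((z:ℝ) ^ (1/(s:ℝ))) ^ (s-2 : ℕ) := by
          rw [Finset.sum_const, Finset.card_range, nsmul_eq_mul]
      _ ≤ (s:ℝ) * ((z:ℝ) ^ (1/(s:ℝ))) ^ (s-2 : ℕ) := by
          apply mul_le_mul_of_nonneg_right _ (by positivity)
          exact_mod_cast Nat.cast_le.mpr (Nat.sub_le s 1)
  -- combine
  have hc0 : (0:ℝ) ≤ (1/(s:ℝ)) * ((z:ℝ)/(s:ℝ)) ^ e := by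
    have : (0:ℝ) ≤ ((z:ℝ)/(s:ℝ)) ^ e := Real.rpow_nonneg (by positivity) _
    positivity
  have main : ∑ ω ∈ S, wgt s ω ≤
      (1/(s:ℝ)) * ((z:ℝ)/(s:ℝ)) ^ e *
        ((((s:ℕ)+1)^s : ℝ) * ((s:ℝ) * ((z:ℝ) ^ (1/(s:ℝ))) ^ (s-2 : ℕ))) := by
    calc ∑ ω ∈ S, wgt s ω
        ≤ ∑ ω ∈ S, (1/(s:ℝ)) * ((z:ℝ)/(s:ℝ)) ^ e * wgt s (ω.erase (topEl ω)) :=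
          Finset.sum_le_sum step1
      _ = (1/(s:ℝ)) * ((z:ℝ)/(s:ℝ)) ^ e * ∑ ω ∈ S, wgt s (ω.erase (topEl ω)) := by
          rw [Finset.mul_sum]
      _ ≤ (1/(s:ℝ)) * ((z:ℝ)/(s:ℝ)) ^ e *
          ((((s:ℕ)+1)^s : ℝ) * ∑ τ ∈ P, wgt s τ) :=
          mul_le_mul_of_nonneg_left step2 hc0
      _ ≤ _ := by
          apply mul_le_mul_of_nonneg_left _ hc0
          apply mul_le_mul_of_nonneg_left step3 (by positivity)
  -- final equality
  have hfin : (1/(s:ℝ)) * ((z:ℝ)/(s:ℝ)) ^ e *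
      ((((s:ℕ)+1)^s : ℝ) * ((s:ℝ) * ((z:ℝ) ^ (1/(s:ℝ))) ^ (s-2 : ℕ)))
      = ((s:ℝ)+1)^s * (s:ℝ) ^ ((1:ℝ) - 1/(s:ℝ)) * (z:ℝ) ^ (-(1:ℝ)/(s:ℝ)) := by
    have hdiv : ((z:ℝ)/(s:ℝ)) ^ e = (z:ℝ) ^ e * (s:ℝ) ^ ((1:ℝ) - 1/(s:ℝ)) := by
      rw [Real.div_rpow hz0.le hs0.le, div_eq_mul_inv, ← Real.rpow_neg hs0.le]
      congr 1
      rw [he]; ring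
    have hW : ((z:ℝ) ^ (1/(s:ℝ))) ^ (s-2 : ℕ) = (z:ℝ) ^ ((1/(s:ℝ)) * ((s-2 : ℕ):ℝ)) := by
      rw [← Real.rpow_natCast ((z:ℝ) ^ (1/(s:ℝ))) (s-2), ← Real.rpow_mul hz0.le]
    have hcomb : (z:ℝ) ^ e * (z:ℝ) ^ ((1/(s:ℝ)) * ((s-2 : ℕ):ℝ)) = (z:ℝ) ^ (-(1:ℝ)/(s:ℝ)) := by
      rw [← Real.rpow_add hz0]
      congr 1
      have hc : ((s-2 : ℕ):ℝ) = (s:ℝ) - 2 := by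
        rw [Nat.cast_sub hs]; norm_num
      rw [he, hc]
      field_simp
      ring
    rw [hdiv, hW]
    have : (1/(s:ℝ)) * ((z:ℝ) ^ e * (s:ℝ) ^ ((1:ℝ) - 1/(s:ℝ))) *
        ((((s:ℕ)+1)^s : ℝ) * ((s:ℝ) * (z:ℝ) ^ ((1/(s:ℝ)) * ((s-2 : ℕ):ℝ))))
        = ((((s:ℕ)+1)^s : ℝ) * (s:ℝ) ^ ((1:ℝ) - 1/(s:ℝ))) *
          ((z:ℝ) ^ e * (z:ℝ) ^ ((1/(s:ℝ)) * ((s-2 : ℕ):ℝ))) * ((1/(s:ℝ)) * (s:ℝ)) := by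
      ring
    rw [this, hcomb, one_div_mul_cancel hsne, mul_one]
  rw [hfin] at main
  exact main
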